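/- Let ψ : U → ℝⁿ be a C^∞ map on an open set U ⊆ ℝᵐ with Dψ(u) injective for every u ∈ U. Let A ⊆ ℝⁿ be open and σ : A → U a C¹ map such that Dψ(σ(a))ᵀ(a − ψ(σ(a))) = 0 for every a ∈ A (σ is a smooth selection of critical points, e.g. of nearest points on ψ(U)). If at a₀ ∈ A the Hessian H at u₀ := σ(a₀) of d_{a₀}(u) := ½‖a₀ − ψ(u)‖² is invertible, then Dσ(a₀) = H⁻¹ Dψ(u₀)ᵀ; equivalently, the projection map P := ψ ∘ σ satisfies DP(a₀) = Dψ(u₀) H⁻¹ Dψ(u₀)ᵀ. -/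

import Mathlib

open scoped RealInnerProductSpace

noncomputable section

/-- Chart formulation of Corollary A.3 (Abatzoglou): the derivative of a smooth selection of
critical points is `H⁻¹ Dψ(u₀)ᵀ`, and the derivative of the induced projection onto the
manifold is `Dψ(u₀) H⁻¹ Dψ(u₀)ᵀ`. -/
theorem stmt_12 {m n : ℕ}
    (U : Set (EuclideanSpace ℝ (Fin m))) (hU : IsOpen U)
    (ψ : EuclideanSpace ℝ (Fin m) → EuclideanSpace ℝ (Fin n))
    (hψ : ContDiffOn ℝ (⊤ : ℕ∞) ψ U)
    (hinj : ∀ u ∈ U, Function.Injective (fderiv ℝ ψ u))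
    (A : Set (EuclideanSpace ℝ (Fin n))) (hA : IsOpen A)
    (σ : EuclideanSpace ℝ (Fin n) → EuclideanSpace ℝ (Fin m))
    (hσ : ContDiffOn ℝ 1 σ A)
    (hσU : ∀ a ∈ A, σ a ∈ U)
    (hcrit : ∀ a ∈ A,
      ContinuousLinearMap.adjoint (fderiv ℝ ψ (σ a)) (a - ψ (σ a)) = 0)
    (a₀ : EuclideanSpace ℝ (Fin n)) (ha₀ : a₀ ∈ A)
    (u₀ : EuclideanSpace ℝ (Fin m)) (hu₀ : u₀ = σ a₀)
    (H Hinv : EuclideanSpace ℝ (Fin m) →L[ℝ] EuclideanSpace ℝ (Fin m))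
    (hH : ∀ v w, ⟪H v, w⟫ =
      fderiv ℝ (fderiv ℝ (fun u => (1 / 2 : ℝ) * ‖a₀ - ψ u‖ ^ 2)) u₀ v w)
    (hHinv₁ : H.comp Hinv = ContinuousLinearMap.id ℝ (EuclideanSpace ℝ (Fin m)))
    (hHinv₂ : Hinv.comp H = ContinuousLinearMap.id ℝ (EuclideanSpace ℝ (Fin m))) :
    fderiv ℝ σ a₀ = Hinv.comp (ContinuousLinearMap.adjoint (fderiv ℝ ψ u₀)) ∧
    fderiv ℝ (fun a => ψ (σ a)) a₀ =
      ((fderiv ℝ ψ u₀).comp Hinv).comp (ContinuousLinearMap.adjoint (fderiv ℝ ψ u₀)) := by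
  subst hu₀
  have hu₀U : σ a₀ ∈ U := hσU a₀ ha₀
  have hψat : ∀ u ∈ U, ContDiffAt ℝ (⊤:ℕ∞) ψ u := fun u hu =>
    (hψ u hu).contDiffAt (hU.mem_nhds hu)
  have hψd : ∀ u ∈ U, HasFDerivAt ψ (fderiv ℝ ψ u) u := fun u hu =>
    ((hψat u hu).differentiableAt (by simp)).hasFDerivAt
  have hψ'at : ContDiffAt ℝ (⊤:ℕ∞) (fderiv ℝ ψ) (σ a₀) :=
    (hψat _ hu₀U).fderiv_right (le_of_eq (by norm_cast))
  set ψ'' := fderiv ℝ (fderiv ℝ ψ) (σ a₀) with hψ''def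
  have hψ''d : HasFDerivAt (fderiv ℝ ψ) ψ'' (σ a₀) :=
    (hψ'at.differentiableAt (by simp)).hasFDerivAt
  have hσd : HasFDerivAt σ (fderiv ℝ σ a₀) a₀ :=
    (((hσ a₀ ha₀).differentiableWithinAt one_ne_zero).differentiableAt
      (hA.mem_nhds ha₀)).hasFDerivAt
  set S := fderiv ℝ σ a₀ with hSdef
  -- first derivative of the distance function on U
  have hd : ∀ u ∈ U, HasFDerivAt (fun u => (1/2:ℝ) * ‖a₀ - ψ u‖^2)
      ((innerSL ℝ (ψ u - a₀)).comp (fderiv ℝ ψ u)) u := by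
    intro u hu
    have h1 : HasFDerivAt (fun u => a₀ - ψ u) (-(fderiv ℝ ψ u)) u := (hψd u hu).const_sub a₀
    have h3 := h1.norm_sq.const_mul (1/2:ℝ)
    refine h3.congr_fderiv ?_
    ext w
    simp [inner_sub_left, inner_neg_right]
  -- Hessian formula (★)
  have heq : fderiv ℝ (fderiv ℝ (fun u => (1/2:ℝ) * ‖a₀ - ψ u‖^2)) (σ a₀) =
      fderiv ℝ (fun u => (innerSL ℝ (ψ u - a₀)).comp (fderiv ℝ ψ u)) (σ a₀) := by
    apply Filter.EventuallyEq.fderiv_eq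
    filter_upwards [hU.mem_nhds hu₀U] with u hu
    exact (hd u hu).fderiv
  have hc : HasFDerivAt (fun u => innerSL ℝ (ψ u - a₀))
      ((innerSL ℝ (E := EuclideanSpace ℝ (Fin n))).comp (fderiv ℝ ψ (σ a₀))) (σ a₀) :=
    (innerSL ℝ (E := EuclideanSpace ℝ (Fin n))).hasFDerivAt.comp (σ a₀)
      ((hψd _ hu₀U).sub_const a₀)
  have hr := hc.clm_comp hψ''d
  have hstar : ∀ v w, ⟪H v, w⟫ =
      ⟪ψ (σ a₀) - a₀, ψ'' v w⟫ + ⟪fderiv ℝ ψ (σ a₀) v, fderiv ℝ ψ (σ a₀) w⟫ := by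
    intro v w
    rw [hH, heq, hr.fderiv]
    simp only [ContinuousLinearMap.add_apply, ContinuousLinearMap.coe_comp',
      Function.comp_apply, ContinuousLinearMap.compL_apply, ContinuousLinearMap.flip_apply,
      innerSL_apply_apply]
  -- derivative of the critical equation (★★)
  have hstar2 : ∀ w h, ⟪a₀ - ψ (σ a₀), ψ'' (S h) w⟫ +
      ⟪h - fderiv ℝ ψ (σ a₀) (S h), fderiv ℝ ψ (σ a₀) w⟫ = 0 := by
    intro w h
    have hp : HasFDerivAt (fun a => a - ψ (σ a))
        (ContinuousLinearMap.id ℝ _ - (fderiv ℝ ψ (σ a₀)).comp S) a₀ :=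
      (hasFDerivAt_id a₀).sub ((hψd _ hu₀U).comp a₀ hσd)
    have hq : HasFDerivAt (fun a => fderiv ℝ ψ (σ a) w)
        ((ContinuousLinearMap.apply ℝ (EuclideanSpace ℝ (Fin n)) w).comp (ψ''.comp S)) a₀ :=
      (ContinuousLinearMap.apply ℝ (EuclideanSpace ℝ (Fin n)) w).hasFDerivAt.comp a₀
        (hψ''d.comp a₀ hσd)
    have hφ := hp.inner ℝ hq
    have hzero : (fun a => ⟪a - ψ (σ a), fderiv ℝ ψ (σ a) w⟫) =ᶠ[nhds a₀]
        (fun _ => (0:ℝ)) := by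
      filter_upwards [hA.mem_nhds ha₀] with a ha
      have h1 : ⟪ContinuousLinearMap.adjoint (fderiv ℝ ψ (σ a)) (a - ψ (σ a)), w⟫ = 0 := by
        rw [hcrit a ha]; simp
      rwa [ContinuousLinearMap.adjoint_inner_left] at h1
    have hz : HasFDerivAt (fun a => ⟪a - ψ (σ a), fderiv ℝ ψ (σ a) w⟫)
        (0 : EuclideanSpace ℝ (Fin n) →L[ℝ] ℝ) a₀ :=
      (hasFDerivAt_const (0:ℝ) a₀).congr_of_eventuallyEq hzero
    have hD := hφ.unique hz
    have h0 := ContinuousLinearMap.ext_iff.mp hD h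
    simp only [ContinuousLinearMap.coe_comp', Function.comp_apply,
      ContinuousLinearMap.prod_apply, fderivInnerCLM_apply, ContinuousLinearMap.coe_sub',
      Pi.sub_apply, ContinuousLinearMap.coe_id', id_eq, ContinuousLinearMap.apply_apply,
      ContinuousLinearMap.zero_apply] at h0
    exact h0
  -- key identity: H (S h) = ψ'ᵀ h
  have key : ∀ h, H (S h) = ContinuousLinearMap.adjoint (fderiv ℝ ψ (σ a₀)) h := by
    intro h
    apply ext_inner_right ℝ
    intro w
    rw [ContinuousLinearMap.adjoint_inner_left, hstar (S h) w]
    have e2 := hstar2 w h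
    simp only [inner_sub_left] at e2 ⊢
    linarith
  have hS : S = Hinv.comp (ContinuousLinearMap.adjoint (fderiv ℝ ψ (σ a₀))) := by
    ext h
    have : Hinv (H (S h)) = S h := by
      have := ContinuousLinearMap.ext_iff.mp hHinv₂ (S h)
      simpa using this
    rw [← this, key h]
    rfl
  refine ⟨hS, ?_⟩
  have hcomp : fderiv ℝ (fun a => ψ (σ a)) a₀ = (fderiv ℝ ψ (σ a₀)).comp S :=
    ((hψd _ hu₀U).comp a₀ hσd).fderiv
  rw [hcomp, hS, ← ContinuousLinearMap.comp_assoc]
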